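/- For every natural number n and all 0 < ε, δ < 1/2, the maximal cardinality of an (n,ε,δ,F)-pseudo-separated set for the skew-product transformation F satisfies N*(n,ε,δ,F) ≥ Σ_{|w|=n} N*(w,ε,δ,G), where the sum is over all words w of length n in F_m^+. -/

import Mathlib

open Metric Filter Set
open scoped Classical

noncomputable section

variable {X : Type*} [MetricSpace X] {Y : Type*} [MetricSpace Y] {ι κ : Type*}

/-- `c` satisfies the `(w, δ)`-chain condition along the word `w`. -/
def IsChainSeq (f : ι → X → X) (w : List ι) (δ : ℝ) (c : ℕ → X) : Prop :=
  ∀ (j : ℕ) (h : j < w.length), dist (f (w.get ⟨j, h⟩) (c j)) (c (j + 1)) ≤ δ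

/-- There is a `(w, δ)`-chain from `a` to `b` with `|w| = n`. -/
def ChainFrom (f : ι → X → X) (δ : ℝ) (a b : X) (n : ℕ) : Prop :=
  ∃ w : List ι, w.length = n ∧ ∃ c : ℕ → X, IsChainSeq f w δ c ∧ c 0 = a ∧ c n = b

/-- `x` is a chain recurrent point of the action generated by `f`. -/
def ChainRecurrentPt (f : ι → X → X) (x : X) : Prop :=
  ∀ ε : ℝ, 0 < ε → ∃ n : ℕ, 0 < n ∧ ChainFrom f ε x x n

/-- The action generated by `f` is chain recurrent. -/
def ChainRecurrent (f : ι → X → X) : Prop := ∀ x : X, ChainRecurrentPt f x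

/-- The action generated by `f` is chain transitive. -/
def ChainTransitive (f : ι → X → X) : Prop :=
  ∀ ε : ℝ, 0 < ε → ∀ a b : X, ∃ n : ℕ, 0 < n ∧ ChainFrom f ε a b n

/-- The action generated by `f` is chain mixing. -/
def ChainMixing (f : ι → X → X) : Prop :=
  ∀ ε : ℝ, 0 < ε → ∃ N : ℕ, 0 < N ∧ ∀ a b : X, ∀ n : ℕ, N ≤ n → ChainFrom f ε a b n

/-- The `ε`-chain recurrence time `r_ε(x, G)`. -/
def rTime (f : ι → X → X) (ε : ℝ) (x : X) : ℕ :=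
  sInf {n : ℕ | 0 < n ∧ ChainFrom f ε x x n}

/-- `r_ε(G) = max_x r_ε(x, G)`. -/
def rTimeSup (f : ι → X → X) (ε : ℝ) : ℕ :=
  sSup (Set.range fun x : X => rTime f ε x)

/-- The chain mixing time `m_ε(x, δ, G)`. -/
def mTime (f : ι → X → X) (ε δ : ℝ) (x : X) : ℕ :=
  sInf {N : ℕ | ∀ n : ℕ, N ≤ n → ∀ y : X, ∃ z : X, dist z x < δ ∧ ChainFrom f ε z y n}

/-- `m_ε(δ, G) = max_x m_ε(x, δ, G)`. -/
def mTimeSup (f : ι → X → X) (ε δ : ℝ) : ℕ :=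
  sSup (Set.range fun x : X => mTime f ε δ x)

/-- `f_w = f_{i₀} ∘ f_{i₁} ∘ ⋯ ∘ f_{i_{k-1}}` applied to `x`. -/
def applyWord (f : ι → X → X) (w : List ι) (x : X) : X := w.foldr f x

/-- The generators of `G^k`, indexed by the words of length `k`. -/
def powerGens (f : ι → X → X) (k : ℕ) : (Fin k → ι) → X → X :=
  fun u => applyWord f (List.ofFn u)

/-- The generators `f_j × g_k` of the product action `G × H`. -/
def prodGens (f : ι → X → X) (g : κ → Y → Y) : ι × κ → X × Y → X × Y :=
  fun p z => (f p.1 z.1, g p.2 z.2)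

/-- `T_ε(x)`: the set of lengths of `(w, ε)`-chains from `x` to itself. -/
def Tset (f : ι → X → X) (ε : ℝ) (x : X) : Set ℕ :=
  {n : ℕ | 0 < n ∧ ChainFrom f ε x x n}

/-- `k = gcd T` for a set `T ⊆ ℕ`. -/
def IsGCDOf (T : Set ℕ) (k : ℕ) : Prop :=
  (∀ t ∈ T, k ∣ t) ∧ ∀ d : ℕ, (∀ t ∈ T, d ∣ t) → d ∣ k

/-- `x ∼_ε y`: there is an `(w, ε)`-chain from `x` to `y` whose length is a multiple of `k`. -/
def RelEps (f : ι → X → X) (ε : ℝ) (k : ℕ) (x y : X) : Prop :=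
  ∃ n : ℕ, 0 < n ∧ k ∣ n ∧ ChainFrom f ε x y n

/-- The orbit segment: the first `j` letters of `w` applied, in order, to `x`. -/
def orbitSeg (f : ι → X → X) (w : List ι) (x : X) (j : ℕ) : X :=
  (w.take j).foldl (fun y i => f i y) x

/-- The Bowen-type word metric `d_w`. -/
def wordDist (f : ι → X → X) (w : List ι) (x y : X) : ℝ :=
  ⨆ j : Fin (w.length + 1), dist (orbitSeg f w x (j : ℕ)) (orbitSeg f w y (j : ℕ))

/-- `N(w, ε, G)`: maximal cardinality of a `(w, ε, G)`-separated subset of `X`. -/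
def sepMax (f : ι → X → X) (w : List ι) (ε : ℝ) : ℕ :=
  sSup {k : ℕ | ∃ K : Finset X,
    (∀ x ∈ K, ∀ y ∈ K, x ≠ y → ε ≤ wordDist f w x y) ∧ K.card = k}

/-- Bufetov's topological entropy `h(G)` of a free semigroup action. -/
def topEntropy {m : ℕ} (f : Fin m → X → X) : ℝ :=
  ⨆ ε : {e : ℝ // 0 < e},
    Filter.limsup (fun n : ℕ =>
      Real.log ((∑ w : Fin n → Fin m, (sepMax f (List.ofFn w) ε.1 : ℝ)) / (m : ℝ) ^ n) / (n : ℝ))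
      Filter.atTop

/-- `N*(w, ε, δ, G)`: maximal cardinality of a `(w, ε, δ, G)`-pseudo-separated set. -/
def pseudoSepMax (f : ι → X → X) (w : List ι) (ε δ : ℝ) : ℕ :=
  sSup {k : ℕ | ∃ K : Finset (ℕ → X),
    (∀ c ∈ K, IsChainSeq f w δ c) ∧
    (∀ c ∈ K, ∀ c' ∈ K, c ≠ c' → ∃ j : ℕ, j < w.length ∧ ε < dist (c j) (c' j)) ∧
    K.card = k}

/-- `B*(w, ε, δ, G)`: minimal cardinality of a `(w, ε, δ, G)`-pseudo-spanning set. -/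
def pseudoSpanMin (f : ι → X → X) (w : List ι) (ε δ : ℝ) : ℕ :=
  sInf {k : ℕ | ∃ K : Finset (ℕ → X),
    (∀ c ∈ K, IsChainSeq f w δ c) ∧
    (∀ c : ℕ → X, IsChainSeq f w δ c →
      ∃ c' ∈ K, ∀ j : ℕ, j < w.length → dist (c j) (c' j) ≤ ε) ∧
    K.card = k}

/-- The pseudo-entropy `h*(G)` of a free semigroup action. -/
def pseudoEntropy {m : ℕ} (f : Fin m → X → X) : ℝ :=
  ⨆ ε : {e : ℝ // 0 < e}, ⨅ δ : {d : ℝ // 0 < d},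
    Filter.limsup (fun n : ℕ =>
      Real.log ((∑ w : Fin n → Fin m, (pseudoSepMax f (List.ofFn w) ε.1 δ.1 : ℝ)) / (m : ℝ) ^ n)
        / (n : ℝ)) Filter.atTop

/-- The metric `d'(ω, ω') = m^{-k}`, `k = inf {n | ωₙ ≠ ω'ₙ}`, on `Σ_m^+ = ℕ → Fin m`. -/
def sigmaDist (m : ℕ) (ω ω' : ℕ → Fin m) : ℝ :=
  if h : ∃ n : ℕ, ω n ≠ ω' n then (1 / (m : ℝ)) ^ Nat.find h else 0

/-- The metric `D = max {d', d}` on `Σ_m^+ × X`. -/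
def skewDist (m : ℕ) (p q : (ℕ → Fin m) × X) : ℝ :=
  max (sigmaDist m p.1 q.1) (dist p.2 q.2)

/-- The skew-product transformation `F(ω, x) = (σ ω, f_{ω 0} x)`. -/
def skewMap {m : ℕ} (f : Fin m → X → X) : (ℕ → Fin m) × X → (ℕ → Fin m) × X :=
  fun p => (fun n => p.1 (n + 1), f (p.1 0) p.2)

/-- `c` is a `δ`-pseudo-orbit of length `n + 1` of the single map `F`,
w.r.t. the distance function `D`. -/
def IsPseudoOrbit {Z : Type*} (D : Z → Z → ℝ) (F : Z → Z) (n : ℕ) (δ : ℝ) (c : ℕ → Z) : Prop :=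
  ∀ j : ℕ, j < n → D (F (c j)) (c (j + 1)) ≤ δ

/-- `N*(n, ε, δ, F)` for a single map `F` w.r.t. a distance function `D`. -/
def pseudoSepMaxMap {Z : Type*} (D : Z → Z → ℝ) (F : Z → Z) (n : ℕ) (ε δ : ℝ) : ℕ :=
  sSup {k : ℕ | ∃ K : Finset (ℕ → Z),
    (∀ c ∈ K, IsPseudoOrbit D F n δ c) ∧
    (∀ c ∈ K, ∀ c' ∈ K, c ≠ c' → ∃ j : ℕ, j < n ∧ ε < D (c j) (c' j)) ∧
    K.card = k}

/-- `B*(n, ε, δ, F)` for a single map `F` w.r.t. a distance function `D`. -/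
def pseudoSpanMinMap {Z : Type*} (D : Z → Z → ℝ) (F : Z → Z) (n : ℕ) (ε δ : ℝ) : ℕ :=
  sInf {k : ℕ | ∃ K : Finset (ℕ → Z),
    (∀ c ∈ K, IsPseudoOrbit D F n δ c) ∧
    (∀ c : ℕ → Z, IsPseudoOrbit D F n δ c →
      ∃ c' ∈ K, ∀ j : ℕ, j ≤ n → D (c j) (c' j) ≤ ε) ∧
    K.card = k}

/-- The pseudo-entropy `h*(F)` of a single map `F` w.r.t. a distance function `D`. -/
def pseudoEntropyMap {Z : Type*} (D : Z → Z → ℝ) (F : Z → Z) : ℝ :=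
  ⨆ ε : {e : ℝ // 0 < e}, ⨅ δ : {d : ℝ // 0 < d},
    Filter.limsup (fun n : ℕ =>
      Real.log (pseudoSepMaxMap D F n ε.1 δ.1 : ℝ) / (n : ℝ)) Filter.atTop

/-- An `ε`-chain of length `n` from `a` to `b` for a single map. -/
def ChainFromMap {Z : Type*} (D : Z → Z → ℝ) (F : Z → Z) (δ : ℝ) (a b : Z) (n : ℕ) : Prop :=
  ∃ c : ℕ → Z, IsPseudoOrbit D F n δ c ∧ c 0 = a ∧ c n = b

/-- `r_ε(z, F)` for a single map. -/
def rTimeMap {Z : Type*} (D : Z → Z → ℝ) (F : Z → Z) (ε : ℝ) (z : Z) : ℕ :=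
  sInf {n : ℕ | 0 < n ∧ ChainFromMap D F ε z z n}

/-- `r_ε(F)` for a single map. -/
def rTimeMapSup {Z : Type*} (D : Z → Z → ℝ) (F : Z → Z) (ε : ℝ) : ℕ :=
  sSup (Set.range fun z : Z => rTimeMap D F ε z)

/-- `m_ε(z, δ, F)` for a single map. -/
def mTimeMap {Z : Type*} (D : Z → Z → ℝ) (F : Z → Z) (ε δ : ℝ) (z : Z) : ℕ :=
  sInf {N : ℕ | ∀ n : ℕ, N ≤ n → ∀ y : Z, ∃ z' : Z, D z' z < δ ∧ ChainFromMap D F ε z' y n}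

/-- `m_ε(δ, F)` for a single map. -/
def mTimeMapSup {Z : Type*} (D : Z → Z → ℝ) (F : Z → Z) (ε δ : ℝ) : ℕ :=
  sSup (Set.range fun z : Z => mTimeMap D F ε δ z)

/-- `N_δ(X)`: the smallest number of sets of diameter at most `δ` that cover `X`. -/
def coverNum (X : Type*) [MetricSpace X] (δ : ℝ) : ℕ :=
  sInf {k : ℕ | ∃ S : Finset (Set X),
    (∀ s ∈ S, Metric.diam s ≤ δ) ∧ (⋃ s ∈ S, s) = Set.univ ∧ S.card = k}

/-- The upper box dimension of `X`. -/
def upperBoxDim (X : Type*) [MetricSpace X] : ℝ :=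
  Filter.limsup (fun δ : ℝ => Real.log (coverNum X δ : ℝ) / (-Real.log δ))
    (nhdsWithin 0 (Set.Ioi 0))

/-- The lower box dimension of `X`. -/
def lowerBoxDim (X : Type*) [MetricSpace X] : ℝ :=
  Filter.liminf (fun δ : ℝ => Real.log (coverNum X δ : ℝ) / (-Real.log δ))
    (nhdsWithin 0 (Set.Ioi 0))

end

lemma sigmaDist_self' {m : ℕ} (ω : ℕ → Fin m) : sigmaDist m ω ω = 0 := by
  simp [sigmaDist]

lemma sigmaDist_eq_one' {m : ℕ} {ω ω' : ℕ → Fin m} (h : ω 0 ≠ ω' 0) :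
    sigmaDist m ω ω' = 1 := by
  rw [sigmaDist, dif_pos ⟨0, h⟩, (Nat.find_eq_zero _).2 h, pow_zero]

lemma sigmaDist_le_of_agree {m L : ℕ} {ω ω' : ℕ → Fin m}
    (h : ∀ i < L, ω i = ω' i) : sigmaDist m ω ω' ≤ (1/2 : ℝ) ^ L := by
  rw [sigmaDist]
  split_ifs with hd
  · have hk := Nat.find_spec hd
    have hLk : L ≤ Nat.find hd := by
      by_contra hc
      push_neg at hc
      exact hk (h _ hc)
    have hm2 : 2 ≤ m := by
      rcases m with _ | _ | m
      · exact (ω 0).elim0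
      · have h1 := (ω (Nat.find hd)).isLt
        have h2 := (ω' (Nat.find hd)).isLt
        exact absurd (Fin.ext (by omega)) hk
      · omega
    calc (1/(m:ℝ)) ^ Nat.find hd ≤ (1/2 : ℝ) ^ Nat.find hd := by
          apply pow_le_pow_left₀ (by positivity)
          apply one_div_le_one_div_of_le (by norm_num)
          exact_mod_cast hm2
      _ ≤ (1/2 : ℝ) ^ L :=
          pow_le_pow_of_le_one (by norm_num) (by norm_num) hLk
  · positivity

theorem stmt2 {X : Type*} [MetricSpace X] [CompactSpace X] {m : ℕ} (hm : 0 < m)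
    (f : Fin m → X → X) (hf : ∀ i, Continuous (f i)) :
    ∀ (n : ℕ) (ε δ : ℝ), 0 < ε → ε < 1 / 2 → 0 < δ → δ < 1 / 2 →
      ∑ w : Fin n → Fin m, pseudoSepMax f (List.ofFn w) ε δ ≤
        pseudoSepMaxMap (skewDist (X := X) m) (skewMap f) n ε δ := by
  intro n ε δ hε hε2 hδ hδ2
  classical
  obtain ⟨L, hL⟩ : ∃ L : ℕ, (1/2 : ℝ) ^ L < ε :=
    exists_pow_lt_of_lt_one hε (by norm_num)
  obtain ⟨t, -, htfin, htcov⟩ :=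
    finite_cover_balls_of_compact (isCompact_univ (X := X)) (half_pos hε)
  have hnet : ∀ x : X, ∃ y, y ∈ htfin.toFinset ∧ dist x y < ε/2 := by
    intro x
    have hx := htcov (Set.mem_univ x)
    simp only [Set.mem_iUnion, Metric.mem_ball] at hx
    obtain ⟨y, hy, hxy⟩ := hx
    exact ⟨y, htfin.mem_toFinset.2 hy, hxy⟩
  -- boundedness of the RHS defining set
  have hbdd : BddAbove {k : ℕ | ∃ K : Finset (ℕ → (ℕ → Fin m) × X),
      (∀ c ∈ K, IsPseudoOrbit (skewDist (X := X) m) (skewMap f) n δ c) ∧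
      (∀ c ∈ K, ∀ c' ∈ K, c ≠ c' →
        ∃ j : ℕ, j < n ∧ ε < skewDist (X := X) m (c j) (c' j)) ∧
      K.card = k} := by
    refine ⟨Fintype.card (Fin n → (Fin L → Fin m) × {y // y ∈ htfin.toFinset}), ?_⟩
    rintro k ⟨K, -, hsep, rfl⟩
    have hcard : K.card ≤
        (Finset.univ : Finset (Fin n → (Fin L → Fin m) × {y // y ∈ htfin.toFinset})).card := by
      apply Finset.card_le_card_of_injOn
        (fun c (j : Fin n) => ((fun i : Fin L => (c (j : ℕ)).1 (i : ℕ)),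
          (⟨(hnet (c (j : ℕ)).2).choose, (hnet (c (j : ℕ)).2).choose_spec.1⟩ :
            {y // y ∈ htfin.toFinset})))
      · intro _ _
        exact Finset.mem_univ _
      · intro c hc c' hc' hcode
        by_contra hne
        obtain ⟨j, hj, hd⟩ := hsep c hc c' hc' hne
        have hcj := congrFun hcode ⟨j, hj⟩
        simp only [Prod.mk.injEq] at hcj
        rw [skewDist] at hd
        rcases lt_max_iff.1 hd with h1 | h2
        · have hag : ∀ i < L, (c j).1 i = (c' j).1 i := by
            intro i hi
            exact congrFun hcj.1 ⟨i, hi⟩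
          have hle := sigmaDist_le_of_agree hag
          linarith
        · have e1 := (hnet (c j).2).choose_spec.2
          have e2 := (hnet (c' j).2).choose_spec.2
          have heq : (hnet (c j).2).choose = (hnet (c' j).2).choose :=
            congrArg Subtype.val hcj.2
          rw [heq] at e1
          have htri : dist (c j).2 (c' j).2 ≤
              dist (c j).2 (hnet (c' j).2).choose + dist (hnet (c' j).2).choose (c' j).2 :=
            dist_triangle _ _ _
          rw [dist_comm (hnet (c' j).2).choose (c' j).2] at htri
          linarith
    simpa using hcard
  -- witnesses for each word
  have hwit : ∀ w : Fin n → Fin m, ∃ K : Finset (ℕ → X),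
      (∀ c ∈ K, IsChainSeq f (List.ofFn w) δ c) ∧
      (∀ c ∈ K, ∀ c' ∈ K, c ≠ c' →
        ∃ j : ℕ, j < (List.ofFn w).length ∧ ε < dist (c j) (c' j)) ∧
      K.card = pseudoSepMax f (List.ofFn w) ε δ := by
    intro w
    by_cases hb : BddAbove {k : ℕ | ∃ K : Finset (ℕ → X),
        (∀ c ∈ K, IsChainSeq f (List.ofFn w) δ c) ∧
        (∀ c ∈ K, ∀ c' ∈ K, c ≠ c' →
          ∃ j : ℕ, j < (List.ofFn w).length ∧ ε < dist (c j) (c' j)) ∧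
        K.card = k}
    · have h0 : (0 : ℕ) ∈ {k : ℕ | ∃ K : Finset (ℕ → X),
          (∀ c ∈ K, IsChainSeq f (List.ofFn w) δ c) ∧
          (∀ c ∈ K, ∀ c' ∈ K, c ≠ c' →
            ∃ j : ℕ, j < (List.ofFn w).length ∧ ε < dist (c j) (c' j)) ∧
          K.card = k} := ⟨∅, by simp, by simp, by simp⟩
      exact Nat.sSup_mem ⟨0, h0⟩ hb
    · rw [pseudoSepMax, csSup_of_not_bddAbove hb, csSup_empty]
      exact ⟨∅, by simp, by simp, by simp⟩
  choose Kw hK1 hK2 hK3 using hwit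
  -- extension of words and embedding of chains
  set ext : (Fin n → Fin m) → ℕ → Fin m :=
    fun w j => if h : j < n then w ⟨j, h⟩ else ⟨0, hm⟩ with hext
  set Φ : (Fin n → Fin m) → (ℕ → X) → ℕ → (ℕ → Fin m) × X :=
    fun w c j => (fun i => ext w (j + i), c j) with hΦdef
  have hextlt : ∀ (w : Fin n → Fin m) (j : ℕ) (hj : j < n), ext w j = w ⟨j, hj⟩ := by
    intro w j hj
    simp [hext, hj]
  have hΦinj : ∀ w, Function.Injective (Φ w) := by
    intro w c c' h
    funext j
    exact congrArg Prod.snd (congrFun h j)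
  have hΦw : ∀ w w' c c', Φ w c = Φ w' c' → w = w' := by
    intro w w' c c' h
    funext i
    have h1 := congrFun (congrArg Prod.fst (congrFun h 0)) (i : ℕ)
    simp only [hΦdef, Nat.zero_add] at h1
    rw [hextlt w _ i.isLt, hextlt w' _ i.isLt] at h1
    exact h1
  set K : Finset (ℕ → (ℕ → Fin m) × X) :=
    Finset.univ.biUnion (fun w => (Kw w).image (Φ w)) with hKdef
  have hdisj : ∀ w ∈ (Finset.univ : Finset (Fin n → Fin m)), ∀ w' ∈ Finset.univ,
      w ≠ w' → Disjoint ((Kw w).image (Φ w)) ((Kw w').image (Φ w')) := by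
    intro w _ w' _ hww
    simp only [Finset.disjoint_left, Finset.mem_image]
    rintro c ⟨a, _, rfl⟩ ⟨b, _, hab⟩
    exact hww (hΦw w w' a b hab.symm)
  have hcard : K.card = ∑ w : Fin n → Fin m, pseudoSepMax f (List.ofFn w) ε δ := by
    rw [hKdef, Finset.card_biUnion hdisj]
    exact Finset.sum_congr rfl fun w _ => by
      rw [Finset.card_image_of_injective _ (hΦinj w), hK3]
  have hmemK : ∀ c ∈ K, ∃ w : Fin n → Fin m, ∃ a ∈ Kw w, c = Φ w a := by
    intro c hc
    simp only [hKdef, Finset.mem_biUnion, Finset.mem_image, Finset.mem_univ, true_and] at hc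
    obtain ⟨w, a, ha, hca⟩ := hc
    exact ⟨w, a, ha, hca.symm⟩
  -- pseudo-orbit property
  have hpo : ∀ c ∈ K, IsPseudoOrbit (skewDist (X := X) m) (skewMap f) n δ c := by
    intro c hc
    obtain ⟨w, a, ha, rfl⟩ := hmemK c hc
    intro j hj
    have hfst : (skewMap f (Φ w a j)).1 = (Φ w a (j + 1)).1 := by
      funext k
      show ext w (j + (k + 1)) = ext w (j + 1 + k)
      congr 1
      omega
    have hchain := hK1 w a ha j (by simpa [List.length_ofFn] using hj)
    rw [skewDist, hfst, sigmaDist_self']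
    have hsnd : (skewMap f (Φ w a j)).2 = f (w ⟨j, hj⟩) (a j) := by
      show f (ext w (j + 0)) (a j) = _
      rw [Nat.add_zero, hextlt w j hj]
    rw [hsnd]
    show max (0 : ℝ) (dist (f (w ⟨j, hj⟩) (a j)) (a (j + 1))) ≤ δ
    rw [max_le_iff]
    refine ⟨le_of_lt hδ, ?_⟩
    convert hchain using 3
    · rfl
    simp [List.get_ofFn]
  -- separation property
  have hsep : ∀ c ∈ K, ∀ c' ∈ K, c ≠ c' →
      ∃ j : ℕ, j < n ∧ ε < skewDist (X := X) m (c j) (c' j) := by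
    intro c hc c' hc' hne
    obtain ⟨w, a, ha, rfl⟩ := hmemK c hc
    obtain ⟨w', b, hb, rfl⟩ := hmemK c' hc'
    by_cases hww : w = w'
    · subst hww
      have hab : a ≠ b := fun h => hne (by rw [h])
      obtain ⟨j, hj, hjd⟩ := hK2 w a ha b hb hab
      rw [List.length_ofFn] at hj
      refine ⟨j, hj, ?_⟩
      calc ε < dist (a j) (b j) := hjd
        _ ≤ skewDist (X := X) m (Φ w a j) (Φ w b j) := le_max_right _ _
    · obtain ⟨i, hi⟩ := Function.ne_iff.1 hww
      refine ⟨(i : ℕ), i.isLt, ?_⟩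
      have h0 : (Φ w a (i : ℕ)).1 0 ≠ (Φ w' b (i : ℕ)).1 0 := by
        show ext w ((i : ℕ) + 0) ≠ ext w' ((i : ℕ) + 0)
        rw [Nat.add_zero, hextlt w _ i.isLt, hextlt w' _ i.isLt]
        exact hi
      have hone : sigmaDist m (Φ w a (i : ℕ)).1 (Φ w' b (i : ℕ)).1 = 1 :=
        sigmaDist_eq_one' h0
      have : ε < sigmaDist m (Φ w a (i : ℕ)).1 (Φ w' b (i : ℕ)).1 := by
        rw [hone]; linarith
      exact lt_of_lt_of_le this (le_max_left _ _)
  have hmem : (∑ w : Fin n → Fin m, pseudoSepMax f (List.ofFn w) ε δ) ∈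
      {k : ℕ | ∃ K : Finset (ℕ → (ℕ → Fin m) × X),
        (∀ c ∈ K, IsPseudoOrbit (skewDist (X := X) m) (skewMap f) n δ c) ∧
        (∀ c ∈ K, ∀ c' ∈ K, c ≠ c' →
          ∃ j : ℕ, j < n ∧ ε < skewDist (X := X) m (c j) (c' j)) ∧
        K.card = k} := ⟨K, hpo, hsep, hcard⟩
  exact le_csSup hbdd hmem
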